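/- Let a < 0, b ∈ ℝ, and define l(n) = logit(Φ(a·√n + b)) for n > 0, where Φ is the standard normal CDF and logit(x) = log(x) − log(1−x). Then l is differentiable on (0,∞) and lim_{n→∞} l′(n) = −a²/2. -/

import Mathlib

open Filter MeasureTheory Set

/-- Standard normal CDF. -/
noncomputable def Phi (x : ℝ) : ℝ :=
  ∫ t in Set.Iio x, (Real.sqrt (2 * Real.pi))⁻¹ * Real.exp (-t ^ 2 / 2)

/-- Standard normal density. -/
noncomputable def stdPdf (x : ℝ) : ℝ := (Real.sqrt (2 * Real.pi))⁻¹ * Real.exp (-x ^ 2 / 2)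

/-- Standard normal quantile function. -/
noncomputable def PhiInv : ℝ → ℝ := Function.invFun Phi

/-- Logit function. -/
noncomputable def logit (x : ℝ) : ℝ := Real.log x - Real.log (1 - x)

lemma stdPdf_pos (x : ℝ) : 0 < stdPdf x := by
  unfold stdPdf; positivity

lemma continuous_stdPdf : Continuous stdPdf := by
  unfold stdPdf; fun_prop

lemma integrable_stdPdf : Integrable stdPdf := by
  unfold stdPdf
  apply Integrable.const_mul
  have h := integrable_exp_neg_mul_sq (by norm_num : (0:ℝ) < 1/2)
  refine h.congr ?_
  filter_upwards with x
  ring_nf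

lemma integral_stdPdf : ∫ x, stdPdf x = 1 := by
  unfold stdPdf
  rw [MeasureTheory.integral_const_mul]
  have : ∀ x : ℝ, Real.exp (-x ^ 2 / 2) = Real.exp (-(1/2) * x ^ 2) := by
    intro x; ring_nf
  simp_rw [this, integral_gaussian]
  rw [inv_mul_eq_one₀ (by positivity)]
  rw [show Real.pi / (1/2) = 2 * Real.pi by ring]

lemma hasDerivAt_stdPdf (x : ℝ) : HasDerivAt stdPdf (-x * stdPdf x) x := by
  unfold stdPdf
  have h1 : HasDerivAt (fun t : ℝ => -t ^ 2 / 2) (-x) x := by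
    have := ((hasDerivAt_pow 2 x).neg).div_const 2
    exact this.congr_deriv (by push_cast; ring)
  have h2 := (h1.exp).const_mul (Real.sqrt (2 * Real.pi))⁻¹
  exact h2.congr_deriv (by ring)

lemma Phi_eq_Iic (x : ℝ) : Phi x = ∫ t in Iic x, stdPdf t := by
  rw [MeasureTheory.integral_Iic_eq_integral_Iio]; rfl

lemma Phi_eq_Iio (x : ℝ) : Phi x = ∫ t in Iio x, stdPdf t := rfl

lemma Phi_pos (x : ℝ) : 0 < Phi x := by
  rw [Phi_eq_Iio]
  rw [setIntegral_pos_iff_support_of_nonneg_ae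
    (Filter.Eventually.of_forall fun t => (stdPdf_pos t).le)
    (integrable_stdPdf.integrableOn)]
  have : Function.support stdPdf = Set.univ := by
    ext t; simp [Function.support, (stdPdf_pos t).ne']
  rw [this, Set.univ_inter]
  simp [Real.volume_Iio]

lemma Phi_lt_one (x : ℝ) : Phi x < 1 := by
  have key : Phi x + ∫ t in Ioi x, stdPdf t = 1 := by
    rw [Phi_eq_Iic, intervalIntegral.integral_Iic_add_Ioi
      integrable_stdPdf.integrableOn integrable_stdPdf.integrableOn, integral_stdPdf]
  have pos : 0 < ∫ t in Ioi x, stdPdf t := by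
    rw [setIntegral_pos_iff_support_of_nonneg_ae
      (Filter.Eventually.of_forall fun t => (stdPdf_pos t).le)
      (integrable_stdPdf.integrableOn)]
    have : Function.support stdPdf = Set.univ := by
      ext t; simp [Function.support, (stdPdf_pos t).ne']
    rw [this, Set.univ_inter]
    simp [Real.volume_Ioi]
  linarith

lemma hasDerivAt_Phi (x : ℝ) : HasDerivAt Phi (stdPdf x) x := by
  have hfun : Phi = fun y => (∫ t in (0:ℝ)..y, stdPdf t) + Phi 0 := by
    funext y
    rw [Phi_eq_Iic, Phi_eq_Iic,
      ← intervalIntegral.integral_Iic_sub_Iic integrable_stdPdf.integrableOn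
        integrable_stdPdf.integrableOn]
    ring
  rw [hfun]
  exact (intervalIntegral.integral_hasDerivAt_right
    (integrable_stdPdf.intervalIntegrable)
    (continuous_stdPdf.stronglyMeasurableAtFilter _ _)
    continuous_stdPdf.continuousAt).add_const _

lemma tendsto_sq_atBot : Tendsto (fun t : ℝ => t ^ 2) atBot atTop := by
  have h1 : Tendsto (fun x : ℝ => x ^ 2) atTop atTop :=
    tendsto_pow_atTop (by norm_num : (2:ℕ) ≠ 0)
  have h2 : Tendsto (fun x : ℝ => -x) atBot atTop := tendsto_neg_atBot_atTop
  have := h1.comp h2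
  exact this.congr (fun x => by simp [Function.comp, neg_pow])

lemma tendsto_stdPdf_atBot : Tendsto stdPdf atBot (nhds 0) := by
  unfold stdPdf
  rw [show (0:ℝ) = (Real.sqrt (2 * Real.pi))⁻¹ * 0 by ring]
  apply Tendsto.const_mul
  apply Real.tendsto_exp_atBot.comp
  apply Filter.Tendsto.atBot_div_const (by norm_num : (0:ℝ) < 2)
  exact tendsto_neg_atTop_atBot.comp tendsto_sq_atBot

lemma abs_mul_stdPdf_le (t : ℝ) :
    ‖t * stdPdf t‖ ≤ (Real.sqrt (2 * Real.pi))⁻¹ * Real.exp (-(1/4) * t ^ 2) := by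
  have h1 : |t| ≤ Real.exp (t ^ 2 / 4) := by
    calc |t| ≤ 1 + t ^ 2 / 4 := by nlinarith [sq_nonneg (|t| - 2), sq_abs t]
    _ ≤ Real.exp (t ^ 2 / 4) := by
        have := Real.add_one_le_exp (t ^ 2 / 4); linarith
  have key : |t| * Real.exp (-t ^ 2 / 2) ≤ Real.exp (-(1/4) * t ^ 2) := by
    calc |t| * Real.exp (-t ^ 2 / 2) ≤ Real.exp (t ^ 2 / 4) * Real.exp (-t ^ 2 / 2) := by
          apply mul_le_mul_of_nonneg_right h1 (Real.exp_nonneg _)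
      _ = Real.exp (-(1/4) * t ^ 2) := by rw [← Real.exp_add]; ring_nf
  have hs : (0:ℝ) < (Real.sqrt (2 * Real.pi))⁻¹ := by positivity
  calc ‖t * stdPdf t‖ = |t| * stdPdf t := by
        rw [norm_mul, Real.norm_eq_abs, Real.norm_eq_abs, abs_of_pos (stdPdf_pos t)]
    _ = (Real.sqrt (2 * Real.pi))⁻¹ * (|t| * Real.exp (-t ^ 2 / 2)) := by unfold stdPdf; ring
    _ ≤ (Real.sqrt (2 * Real.pi))⁻¹ * Real.exp (-(1/4) * t ^ 2) := by
        apply mul_le_mul_of_nonneg_left key hs.le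

lemma integrable_mul_stdPdf : Integrable (fun t => t * stdPdf t) := by
  have hb : Integrable (fun t : ℝ => (Real.sqrt (2 * Real.pi))⁻¹ * Real.exp (-(1/4) * t ^ 2)) :=
    (integrable_exp_neg_mul_sq (by norm_num : (0:ℝ) < 1/4)).const_mul _
  exact hb.mono' (continuous_id.mul continuous_stdPdf).aestronglyMeasurable
    (Filter.Eventually.of_forall abs_mul_stdPdf_le)

lemma tendsto_id_mul_stdPdf_atBot : Tendsto (fun t => t * stdPdf t) atBot (nhds 0) := by
  apply squeeze_zero_norm abs_mul_stdPdf_le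
  rw [show (0:ℝ) = (Real.sqrt (2 * Real.pi))⁻¹ * 0 by ring]
  apply Tendsto.const_mul
  apply Real.tendsto_exp_atBot.comp
  exact (tendsto_const_mul_atBot_of_neg (by norm_num : (-(1/4):ℝ) < 0)).mpr tendsto_sq_atBot

lemma integral_Iic_mul_stdPdf (x : ℝ) : ∫ t in Iic x, t * stdPdf t = -stdPdf x := by
  have h := MeasureTheory.integral_Iic_of_hasDerivAt_of_tendsto'
    (f := fun t => -stdPdf t) (f' := fun t => t * stdPdf t) (a := x) (m := 0)
    (fun t _ => by have := (hasDerivAt_stdPdf t).neg; simp only [neg_mul, neg_neg] at this; exact this)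
    integrable_mul_stdPdf.integrableOn
    (by simpa using tendsto_stdPdf_atBot.neg)
  simpa using h

lemma mills_upper {x : ℝ} (hx : x < 0) : Phi x ≤ stdPdf x / (-x) := by
  have hmono : ∫ t in Iic x, stdPdf t ≤ ∫ t in Iic x, x⁻¹ * (t * stdPdf t) := by
    apply setIntegral_mono_on integrable_stdPdf.integrableOn
      ((integrable_mul_stdPdf.const_mul _).integrableOn) measurableSet_Iic
    intro t ht
    have ht' : t ≤ x := ht
    have h1 : (1:ℝ) ≤ t / x := (one_le_div_of_neg hx).mpr ht'
    have := mul_le_mul_of_nonneg_right h1 (stdPdf_pos t).le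
    calc stdPdf t = 1 * stdPdf t := by ring
      _ ≤ t / x * stdPdf t := this
      _ = x⁻¹ * (t * stdPdf t) := by ring
  rw [Phi_eq_Iic]
  calc (∫ t in Iic x, stdPdf t) ≤ ∫ t in Iic x, x⁻¹ * (t * stdPdf t) := hmono
    _ = x⁻¹ * ∫ t in Iic x, t * stdPdf t := by rw [MeasureTheory.integral_const_mul]
    _ = x⁻¹ * (-stdPdf x) := by rw [integral_Iic_mul_stdPdf]
    _ = stdPdf x / (-x) := by rw [div_neg]; ring

noncomputable def millsG (t : ℝ) : ℝ := -t * stdPdf t / (1 + t ^ 2)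
noncomputable def millsG' (t : ℝ) : ℝ := stdPdf t * (1 - 2 / (1 + t ^ 2) ^ 2)

lemma one_add_sq_pos (t : ℝ) : (0:ℝ) < 1 + t ^ 2 := by positivity

lemma hasDerivAt_millsG (t : ℝ) : HasDerivAt millsG (millsG' t) t := by
  have h1 : HasDerivAt (fun s : ℝ => -s * stdPdf s)
      (-1 * stdPdf t + -t * (-t * stdPdf t)) t :=
    ((hasDerivAt_id t).neg).mul (hasDerivAt_stdPdf t)
  have h2 : HasDerivAt (fun s : ℝ => 1 + s ^ 2) (2 * t) t := by
    have := (hasDerivAt_pow 2 t).const_add 1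
    exact this.congr_deriv (by push_cast; ring)
  have h := h1.div h2 (one_add_sq_pos t).ne'
  refine h.congr_deriv ?_
  unfold millsG'
  field_simp
  ring

lemma millsG'_le (t : ℝ) : millsG' t ≤ stdPdf t := by
  unfold millsG'
  have h2 : 0 ≤ 2 / (1 + t ^ 2) ^ 2 := by positivity
  nlinarith [stdPdf_pos t]

lemma integrable_millsG' : Integrable millsG' := by
  have hc : Continuous millsG' := by
    unfold millsG'
    exact continuous_stdPdf.mul (continuous_const.sub (continuous_const.div
      (continuous_pow 2 |>.comp (continuous_const.add (continuous_pow 2)))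
      (fun t => by positivity)))
  refine integrable_stdPdf.mono' hc.aestronglyMeasurable ?_
  filter_upwards with t
  unfold millsG'
  rw [norm_mul, Real.norm_eq_abs, Real.norm_eq_abs, abs_of_pos (stdPdf_pos t)]
  have h1 : (1 + t ^ 2) ^ 2 ≥ 1 := by nlinarith [sq_nonneg t]
  have h2 : 2 / (1 + t ^ 2) ^ 2 ≤ 2 := by
    rw [div_le_iff₀ (by positivity)]; nlinarith
  have h3 : 0 ≤ 2 / (1 + t ^ 2) ^ 2 := by positivity
  have : |1 - 2 / (1 + t ^ 2) ^ 2| ≤ 1 := abs_le.mpr ⟨by linarith, by linarith⟩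
  calc stdPdf t * |1 - 2 / (1 + t ^ 2) ^ 2| ≤ stdPdf t * 1 :=
        mul_le_mul_of_nonneg_left this (stdPdf_pos t).le
    _ = stdPdf t := by ring

lemma tendsto_millsG_atBot : Tendsto millsG atBot (nhds 0) := by
  apply squeeze_zero_norm (a := fun t => ‖t * stdPdf t‖) (t₀ := atBot)
  · intro t
    unfold millsG
    rw [norm_div, norm_mul, norm_neg]
    rw [Real.norm_eq_abs (1 + t ^ 2), abs_of_pos (one_add_sq_pos t)]
    rw [← norm_mul]
    apply div_le_self (by positivity)
    nlinarith [sq_nonneg t]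
  · simpa using tendsto_id_mul_stdPdf_atBot.norm

lemma integral_Iic_millsG' (x : ℝ) : ∫ t in Iic x, millsG' t = millsG x := by
  have h := MeasureTheory.integral_Iic_of_hasDerivAt_of_tendsto'
    (f := millsG) (f' := millsG') (a := x) (m := 0)
    (fun t _ => hasDerivAt_millsG t) integrable_millsG'.integrableOn tendsto_millsG_atBot
  simpa using h

lemma mills_lower (x : ℝ) : stdPdf x * (-x) / (1 + x ^ 2) ≤ Phi x := by
  rw [Phi_eq_Iic]
  have hle : ∫ t in Iic x, millsG' t ≤ ∫ t in Iic x, stdPdf t :=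
    setIntegral_mono_on integrable_millsG'.integrableOn integrable_stdPdf.integrableOn
      measurableSet_Iic (fun t _ => millsG'_le t)
  calc stdPdf x * (-x) / (1 + x ^ 2) = millsG x := by unfold millsG; ring_nf
    _ = ∫ t in Iic x, millsG' t := (integral_Iic_millsG' x).symm
    _ ≤ _ := hle

lemma tendsto_Phi_atBot : Tendsto Phi atBot (nhds 0) := by
  apply tendsto_of_tendsto_of_tendsto_of_le_of_le' (g := fun _ : ℝ => (0:ℝ))
    (h := fun x => stdPdf x * (-x)⁻¹) tendsto_const_nhds
  · have h1 : Tendsto (fun x : ℝ => (-x)⁻¹) atBot (nhds 0) :=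
      tendsto_neg_atBot_atTop.inv_tendsto_atTop
    simpa using tendsto_stdPdf_atBot.mul h1
  · filter_upwards with x using (Phi_pos x).le
  · filter_upwards [eventually_lt_atBot (0:ℝ)] with x hx
    rw [← div_eq_mul_inv]
    exact mills_upper hx

lemma tendsto_mills : Tendsto (fun x => stdPdf x / (-x * Phi x)) atBot (nhds 1) := by
  apply tendsto_of_tendsto_of_tendsto_of_le_of_le' (g := fun _ : ℝ => (1:ℝ))
    (h := fun x => 1 + (x ^ 2)⁻¹) tendsto_const_nhds
  · simpa using (tendsto_const_nhds (x := (1:ℝ)) (f := atBot)).add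
      tendsto_sq_atBot.inv_tendsto_atTop
  · filter_upwards [eventually_lt_atBot (0:ℝ)] with x hx
    have hnx : 0 < -x := by linarith
    have hdenom : 0 < -x * Phi x := mul_pos hnx (Phi_pos x)
    rw [le_div_iff₀ hdenom, one_mul]
    have := mills_upper hx
    rw [le_div_iff₀ hnx] at this
    linarith [this]
  · filter_upwards [eventually_lt_atBot (0:ℝ)] with x hx
    have hnx : 0 < -x := by linarith
    have hlow := mills_lower x
    have hb : 0 < stdPdf x * (-x) / (1 + x ^ 2) * (-x) := by
      have := stdPdf_pos x; positivity
    have hkey : stdPdf x * (-x) / (1 + x ^ 2) * (-x) ≤ -x * Phi x := by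
      have := mul_le_mul_of_nonneg_right hlow hnx.le
      linarith [this]
    have h1 : stdPdf x / (-x * Phi x) ≤ stdPdf x / (stdPdf x * (-x) / (1 + x ^ 2) * (-x)) :=
      div_le_div_of_nonneg_left (stdPdf_pos x).le hb hkey
    have h2 : stdPdf x / (stdPdf x * (-x) / (1 + x ^ 2) * (-x)) = 1 + (x ^ 2)⁻¹ := by
      have hφ := (stdPdf_pos x).ne'
      have hx0 : x ≠ 0 := by linarith
      field_simp
      ring
    rw [h2] at h1
    exact h1

theorem stmt4 (a b : ℝ) (ha : a < 0) :
    DifferentiableOn ℝ (fun n : ℝ => logit (Phi (a * Real.sqrt n + b))) (Set.Ioi 0) ∧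
    Filter.Tendsto (deriv (fun n : ℝ => logit (Phi (a * Real.sqrt n + b))))
      Filter.atTop (nhds (-a ^ 2 / 2)) := by
  set u : ℝ → ℝ := fun n => a * Real.sqrt n + b with hu_def
  set D : ℝ → ℝ := fun n => (Phi (u n))⁻¹ * (stdPdf (u n) * (a * (1 / (2 * Real.sqrt n))))
      - (1 - Phi (u n))⁻¹ * -(stdPdf (u n) * (a * (1 / (2 * Real.sqrt n)))) with hD_def
  have hder : ∀ n ∈ Ioi (0:ℝ),
      HasDerivAt (fun m : ℝ => logit (Phi (a * Real.sqrt m + b))) (D n) n := by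
    intro n hn
    have hn0 : (0:ℝ) < n := hn
    have hu : HasDerivAt u (a * (1 / (2 * Real.sqrt n))) n :=
      ((Real.hasDerivAt_sqrt hn0.ne').const_mul a).add_const b
    have hP : HasDerivAt (fun m : ℝ => Phi (u m))
        (stdPdf (u n) * (a * (1 / (2 * Real.sqrt n)))) n :=
      (hasDerivAt_Phi (u n)).comp n hu
    have hl1 : HasDerivAt (fun m : ℝ => Real.log (Phi (u m)))
        ((Phi (u n))⁻¹ * (stdPdf (u n) * (a * (1 / (2 * Real.sqrt n))))) n :=
      by have := (Real.hasDerivAt_log (Phi_pos (u n)).ne').comp n hP; exact this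
    have h1P : HasDerivAt (fun m : ℝ => 1 - Phi (u m))
        (-(stdPdf (u n) * (a * (1 / (2 * Real.sqrt n))))) n := hP.const_sub 1
    have h1Pne : (1 : ℝ) - Phi (u n) ≠ 0 := by have := Phi_lt_one (u n); intro h; linarith
    have hl2 : HasDerivAt (fun m : ℝ => Real.log (1 - Phi (u m)))
        ((1 - Phi (u n))⁻¹ * -(stdPdf (u n) * (a * (1 / (2 * Real.sqrt n))))) n :=
      by have := (Real.hasDerivAt_log h1Pne).comp n h1P; exact this
    have h := hl1.sub hl2
    simp only [logit]
    exact h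
  constructor
  · exact fun n hn => (hder n hn).differentiableAt.differentiableWithinAt
  · have hsqrt_top : Tendsto Real.sqrt atTop atTop := by
      apply (tendsto_rpow_atTop (by norm_num : (0:ℝ) < 1/2)).congr'
      filter_upwards [eventually_ge_atTop (0:ℝ)] with x hx
      exact (Real.sqrt_eq_rpow x).symm
    have h_u_bot : Tendsto u atTop atBot := by
      apply tendsto_atBot_add_const_right
      exact (tendsto_const_mul_atBot_of_neg ha).mpr hsqrt_top
    have hinv0 : Tendsto (fun n : ℝ => 1 / (2 * Real.sqrt n)) atTop (nhds 0) := by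
      have h2 : Tendsto (fun n : ℝ => 2 * Real.sqrt n) atTop atTop :=
        hsqrt_top.const_mul_atTop (by norm_num)
      simp only [one_div]
      exact h2.inv_tendsto_atTop
    have hP0 : Tendsto (fun n => Phi (u n)) atTop (nhds 0) := tendsto_Phi_atBot.comp h_u_bot
    have hpdf0 : Tendsto (fun n => stdPdf (u n)) atTop (nhds 0) :=
      tendsto_stdPdf_atBot.comp h_u_bot
    have hT2 : Tendsto (fun n => (1 - Phi (u n))⁻¹
        * -(stdPdf (u n) * (a * (1 / (2 * Real.sqrt n))))) atTop (nhds 0) := by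
      have := ((tendsto_const_nhds (x := (1:ℝ)) (f := atTop)).sub hP0).inv₀ (by norm_num)
        |>.mul (hpdf0.mul ((tendsto_const_nhds (x := a) (f := atTop)).mul hinv0)).neg
      simpa using this
    have hT1 : Tendsto (fun n => (Phi (u n))⁻¹
        * (stdPdf (u n) * (a * (1 / (2 * Real.sqrt n))))) atTop (nhds (-a ^ 2 / 2)) := by
      have hr : Tendsto (fun n => stdPdf (u n) / (-(u n) * Phi (u n))) atTop (nhds 1) :=
        tendsto_mills.comp h_u_bot
      have hS : Tendsto (fun n : ℝ => -a ^ 2 / 2 - a * b * (1 / (2 * Real.sqrt n)))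
          atTop (nhds (-a ^ 2 / 2)) := by
        have := (tendsto_const_nhds (x := -a^2/2) (f := atTop)).sub
          ((tendsto_const_nhds (x := a*b) (f := atTop)).mul hinv0)
        simpa using this
      have hmul := hr.mul hS
      rw [one_mul] at hmul
      apply hmul.congr'
      filter_upwards [eventually_ge_atTop (1:ℝ),
        h_u_bot.eventually (eventually_lt_atBot (0:ℝ))] with n hn1 hun
      have hsn : (0:ℝ) < Real.sqrt n := Real.sqrt_pos.mpr (by linarith)
      have key : -a ^ 2 / 2 - a * b * (1 / (2 * Real.sqrt n))
          = -(u n) * (a * (1 / (2 * Real.sqrt n))) := by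
        simp only [hu_def]
        field_simp
        ring
      have hune : -(u n) ≠ 0 := by intro h; simp only [neg_eq_zero] at h; linarith [hun, h]
      rw [key, div_mul_eq_mul_div,
        show stdPdf (u n) * (-u n * (a * (1 / (2 * Real.sqrt n))))
          = -u n * (stdPdf (u n) * (a * (1 / (2 * Real.sqrt n)))) from by ring,
        mul_div_mul_left _ _ hune, div_eq_inv_mul]
    have hDlim : Tendsto D atTop (nhds (-a ^ 2 / 2)) := by
      have h := hT1.sub hT2
      rw [sub_zero] at h
      exact h
    apply hDlim.congr'
    filter_upwards [eventually_gt_atTop (0:ℝ)] with n hn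
    exact ((hder n hn).deriv).symm
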